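/- Let w : Z^d → ℝ be a positive supersolution of (H_V - λ)ψ = 0 in Z^d_{≥N} and let φ : Z^d → ℝ be finitely supported with φ_n = 0 whenever N-1 ≤ |n| < N+1. Then Σ_{|n|≥N} Σ_{j=1}^d [D_j(wφ)]_n² + Σ_{|n|≥N} (V_n - λ) w_n² φ_n² ≥ Σ_{|n|≥N} Σ_{j=1}^d w_n w_{n-δ_j} (D_j φ)_n². -/

import Mathlib

open scoped BigOperators

noncomputable section

/-- Euclidean norm of a lattice point in `ℤ^d`. -/
def znorm {d : ℕ} (v : Fin d → ℤ) : ℝ := Real.sqrt (∑ j, ((v j : ℝ))^2)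

/-- The discrete Laplacian `(-Δψ)_n = Σ_{|m-n|=1} (ψ_n - ψ_m)`. -/
def negLap {d : ℕ} (ψ : (Fin d → ℤ) → ℝ) (n : Fin d → ℤ) : ℝ :=
  ∑ᶠ (m : Fin d → ℤ) (_ : znorm (m - n) = 1), (ψ n - ψ m)

/-- The partial difference operator `(D_j ψ)_n = ψ_n - ψ_{n-δ_j}`. -/
def Dop {d : ℕ} (j : Fin d) (ψ : (Fin d → ℤ) → ℝ) (n : Fin d → ℤ) : ℝ :=
  ψ n - ψ (n - Pi.single j 1)

section SupersolutionAux

variable {d : ℕ}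

lemma znorm_eq_norm (v : Fin d → ℤ) :
    znorm v = ‖(WithLp.equiv 2 (Fin d → ℝ)).symm (fun i => (v i : ℝ))‖ := by
  rw [EuclideanSpace.norm_eq]
  simp [znorm, Real.norm_eq_abs, sq_abs]

lemma znorm_sub_le (a b : Fin d → ℤ) : znorm (a - b) ≤ znorm a + znorm b := by
  have h : (WithLp.equiv 2 (Fin d → ℝ)).symm (fun i => ((a - b) i : ℝ))
      = (WithLp.equiv 2 (Fin d → ℝ)).symm (fun i => (a i : ℝ))
        - (WithLp.equiv 2 (Fin d → ℝ)).symm (fun i => (b i : ℝ)) := by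
    ext i; simp [Pi.sub_apply]
  rw [znorm_eq_norm, znorm_eq_norm, znorm_eq_norm, h]
  exact norm_sub_le _ _

lemma znorm_neg (v : Fin d → ℤ) : znorm (-v) = znorm v := by
  unfold znorm
  congr 1
  refine Finset.sum_congr rfl fun i _ => ?_
  simp [Pi.neg_apply]

lemma znorm_single (j : Fin d) : znorm (Pi.single j (1:ℤ)) = 1 := by
  have h : ∑ i, (((Pi.single j 1 : Fin d → ℤ) i : ℝ))^2 = 1 := by
    rw [Finset.sum_eq_single j]
    · simp
    · intro i _ hi; rw [Pi.single_eq_of_ne hi]; simp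
    · simp
  simp [znorm, h]

lemma single_eq_single_iff {j k : Fin d} (h : (Pi.single j 1 : Fin d → ℤ) = Pi.single k 1) : j = k := by
  by_contra hjk
  have h2 := congrFun h j
  rw [Pi.single_eq_same, Pi.single_eq_of_ne hjk] at h2
  exact one_ne_zero h2

lemma znorm_eq_one_iff {v : Fin d → ℤ} :
    znorm v = 1 ↔ ∃ j, v = (Pi.single j 1 : Fin d → ℤ) ∨ v = -(Pi.single j 1 : Fin d → ℤ) := by
  constructor
  · intro h
    have h1 : ∑ i, ((v i : ℝ))^2 = 1 := by
      have := Real.sqrt_eq_one.mp h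
      exact this
    have h2 : ∑ i, (v i)^2 = 1 := by exact_mod_cast h1
    obtain ⟨j, hj⟩ : ∃ j, v j ≠ 0 := by
      by_contra hc
      push_neg at hc
      simp [hc] at h2
    have hle : (v j)^2 ≤ 1 := by
      calc (v j)^2 ≤ ∑ i, (v i)^2 :=
        Finset.single_le_sum (fun i _ => sq_nonneg (v i)) (Finset.mem_univ j)
      _ = 1 := h2
    have hge : 1 ≤ (v j)^2 := by
      have h3 : 1 ≤ |v j| := Int.one_le_abs hj
      nlinarith [sq_abs (v j)]
    have heq : (v j)^2 = 1 := le_antisymm hle hge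
    have hrest : ∀ i, i ≠ j → v i = 0 := by
      intro i hi
      have h4 : ∑ k ∈ Finset.univ.erase j, (v k)^2 = 0 := by
        have h5 : (v j)^2 + ∑ k ∈ Finset.univ.erase j, (v k)^2 = ∑ k, (v k)^2 :=
          Finset.add_sum_erase Finset.univ (fun k => (v k)^2) (Finset.mem_univ j)
        rw [h2, heq] at h5
        linarith
      have h6 := (Finset.sum_eq_zero_iff_of_nonneg (fun k _ => sq_nonneg (v k))).mp h4 i
        (Finset.mem_erase.mpr ⟨hi, Finset.mem_univ i⟩)
      exact pow_eq_zero_iff (n := 2) (by norm_num) |>.mp h6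
    have hv : v = Pi.single j (v j) := by
      funext i
      by_cases hij : i = j
      · subst hij; simp
      · rw [Pi.single_eq_of_ne hij]; exact hrest i hij
    have hu : v j = 1 ∨ v j = -1 := by
      have : v j * v j = 1 := by nlinarith
      rcases Int.mul_eq_one_iff_eq_one_or_neg_one.mp this with ⟨h7, _⟩ | ⟨h7, _⟩
      · exact Or.inl h7
      · exact Or.inr h7
    refine ⟨j, ?_⟩
    rcases hu with h7 | h7
    · exact Or.inl (by rw [hv, h7])
    · refine Or.inr ?_
      rw [hv, h7]
      funext i
      by_cases hij : i = j
      · subst hij; simp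
      · rw [Pi.single_eq_of_ne hij]; simp [Pi.single_eq_of_ne hij]
  · rintro ⟨j, rfl | rfl⟩
    · exact znorm_single j
    · rw [znorm_neg]; exact znorm_single j


lemma negLap_eq (u : (Fin d → ℤ) → ℝ) (n : Fin d → ℤ) :
    negLap u n = ∑ j, ((u n - u (n - Pi.single j 1)) + (u n - u (n + Pi.single j 1))) := by
  classical
  have hinj : ∀ p ∈ (Finset.univ : Finset (Fin d × Bool)), ∀ q ∈ (Finset.univ : Finset (Fin d × Bool)),
      (if p.2 then n + Pi.single p.1 1 else n - Pi.single p.1 1)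
      = (if q.2 then n + Pi.single q.1 1 else n - Pi.single q.1 1) → p = q := by
    rintro ⟨j, b⟩ - ⟨k, c⟩ - h
    have hne : ∀ j k : Fin d, n + (Pi.single j 1 : Fin d → ℤ) ≠ n - Pi.single k 1 := by
      intro j k h9
      have h2 : (Pi.single j 1 : Fin d → ℤ) = -Pi.single k 1 := by
        have h10 := h9
        rw [sub_eq_add_neg] at h10
        exact add_left_cancel h10
      have h3 := congrFun h2 j
      rw [Pi.single_eq_same, Pi.neg_apply] at h3
      by_cases hjk : j = k
      · subst hjk; rw [Pi.single_eq_same] at h3; omega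
      · rw [Pi.single_eq_of_ne hjk] at h3
        omega
    cases b <;> cases c <;> simp only [if_true, if_false] at h
    · have : (Pi.single j 1 : Fin d → ℤ) = Pi.single k 1 := by
        have := h; rw [sub_eq_add_neg, sub_eq_add_neg] at this
        have h2 := add_left_cancel this
        exact neg_injective h2
      exact Prod.ext (single_eq_single_iff this) rfl
    · exact absurd h.symm (hne k j)
    · exact absurd h (hne j k)
    · have : (Pi.single j 1 : Fin d → ℤ) = Pi.single k 1 := add_left_cancel h
      exact Prod.ext (single_eq_single_iff this) rfl
  have hset : {m : Fin d → ℤ | znorm (m - n) = 1}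
      = ↑(Finset.image (fun p : Fin d × Bool =>
          if p.2 then n + Pi.single p.1 1 else n - Pi.single p.1 1) Finset.univ) := by
    ext m
    simp only [Set.mem_setOf_eq, Finset.coe_image, Set.mem_image, Finset.mem_coe,
      Finset.mem_univ, true_and, Finset.coe_univ, Set.image_univ, Set.mem_range]
    rw [znorm_eq_one_iff]
    constructor
    · rintro ⟨j, hj | hj⟩
      · refine ⟨(j, true), ?_⟩
        simp only [if_true]
        rw [← hj]; abel
      · exact ⟨(j, false), by simp [sub_eq_iff_eq_add.mp hj]; abel⟩
    · rintro ⟨⟨j, b⟩, hb⟩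
      cases b <;> simp only [if_true, if_false] at hb
      · exact ⟨j, Or.inr (by rw [← hb]; simp only [Bool.false_eq_true, if_false]; abel)⟩
      · exact ⟨j, Or.inl (by rw [← hb]; abel)⟩
  have h0 : negLap u n = ∑ᶠ m ∈ {m : Fin d → ℤ | znorm (m - n) = 1}, (u n - u m) := rfl
  rw [h0, hset, finsum_mem_coe_finset, Finset.sum_image hinj, Fintype.sum_prod_type]
  refine Finset.sum_congr rfl fun j _ => ?_
  rw [Fintype.sum_bool]
  norm_num
  ring

lemma support_fsum_finite (F : Fin d → (Fin d → ℤ) → ℝ)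
    (h : ∀ j, (Function.support (F j)).Finite) :
    (Function.support fun n => ∑ j, F j n).Finite := by
  refine Set.Finite.subset (Set.finite_iUnion h) ?_
  intro n hn
  by_contra hc
  simp only [Set.mem_iUnion, Function.mem_support, not_exists, not_not] at hc
  exact hn (Finset.sum_eq_zero fun j _ => hc j)

lemma support_shift_finite {ψ : (Fin d → ℤ) → ℝ} (hψ : (Function.support ψ).Finite)
    (c : Fin d → ℤ) (F : (Fin d → ℤ) → ℝ)
    (hF : ∀ n, ψ n = 0 → ψ (n - c) = 0 → F n = 0) :
    (Function.support F).Finite := by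
  refine Set.Finite.subset (hψ.union (hψ.image (fun m => m + c))) ?_
  intro n hn
  by_cases h1 : ψ n = 0
  · by_cases h2 : ψ (n - c) = 0
    · exact absurd (hF n h1 h2) hn
    · exact Or.inr ⟨n - c, h2, sub_add_cancel n c⟩
  · exact Or.inl h1

theorem key_ineq (N : ℕ) (V : (Fin d → ℤ) → ℝ) (lam : ℝ)
    (w ψ : (Fin d → ℤ) → ℝ)
    (hw_nonneg : ∀ n, 0 ≤ w n)
    (hw_super : ∀ n : Fin d → ℤ, (N : ℝ) ≤ znorm n →
      0 ≤ negLap w n + (V n - lam) * w n)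
    (hψfin : (Function.support ψ).Finite)
    (hψ0 : ∀ n, znorm n < (N : ℝ) → ψ n = 0) :
    ∑ᶠ n, ∑ j : Fin d, w n * w (n - Pi.single j 1) * (Dop j ψ n) ^ 2
    ≤ (∑ᶠ n, ∑ j : Fin d, (Dop j (fun m => w m * ψ m) n) ^ 2)
      + ∑ᶠ n, (V n - lam) * w n ^ 2 * ψ n ^ 2 := by
  classical
  set g : (Fin d → ℤ) → ℝ := fun n => w n * ψ n ^ 2 with hg
  have hgsupp : ∀ n, ψ n = 0 → g n = 0 := by intro n h; simp [hg, h]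
  have hgfin : (Function.support g).Finite :=
    hψfin.subset fun n hn => by
      simp only [Function.mem_support] at hn ⊢
      exact fun h => hn (hgsupp n h)
  -- finiteness of the per-direction summands
  have hAfin : ∀ j : Fin d,
      (Function.support fun n => w n * w (n - Pi.single j 1) * (Dop j ψ n) ^ 2).Finite := by
    intro j
    refine support_shift_finite hψfin (Pi.single j 1) _ fun n h1 h2 => ?_
    simp [Dop, h1, h2]
  have hEfin : ∀ j : Fin d,
      (Function.support fun n =>
        (w n - w (n - Pi.single j 1)) * (g n - g (n - Pi.single j 1))).Finite := by
    intro j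
    refine support_shift_finite hψfin (Pi.single j 1) _ fun n h1 h2 => ?_
    simp [hgsupp _ h1, hgsupp _ h2]
  have hRfin : ∀ j : Fin d,
      (Function.support fun n =>
        ((w n - w (n - Pi.single j 1)) + (w n - w (n + Pi.single j 1))) * g n).Finite := by
    intro j
    refine hgfin.subset fun n hn => ?_
    simp only [Function.mem_support] at hn ⊢
    intro h; rw [h, mul_zero] at hn; exact hn rfl
  -- summation by parts in direction j
  have hpart : ∀ j : Fin d,
      (∑ᶠ n, (w n - w (n - Pi.single j 1)) * (g n - g (n - Pi.single j 1)))
      = ∑ᶠ n, ((w n - w (n - Pi.single j 1)) + (w n - w (n + Pi.single j 1))) * g n := by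
    intro j
    set c : Fin d → ℤ := Pi.single j 1 with hc
    have f1 : (Function.support fun n => w n * g n).Finite := by
      refine hgfin.subset fun n hn => ?_
      simp only [Function.mem_support] at hn ⊢
      intro h; rw [h, mul_zero] at hn; exact hn rfl
    have f2 : (Function.support fun n => w (n - c) * g (n - c)).Finite := by
      refine support_shift_finite hψfin c _ fun n h1 h2 => ?_
      simp [hgsupp _ h2]
    have f3 : (Function.support fun n => w n * g (n - c)).Finite := by
      refine support_shift_finite hψfin c _ fun n h1 h2 => ?_
      simp [hgsupp _ h2]
    have f4 : (Function.support fun n => w (n - c) * g n).Finite := by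
      refine hgfin.subset fun n hn => ?_
      simp only [Function.mem_support] at hn ⊢
      intro h; rw [h, mul_zero] at hn; exact hn rfl
    have f5 : (Function.support fun n => w (n + c) * g n).Finite := by
      refine hgfin.subset fun n hn => ?_
      simp only [Function.mem_support] at hn ⊢
      intro h; rw [h, mul_zero] at hn; exact hn rfl
    have h1 : (∑ᶠ n, w (n - c) * g (n - c)) = ∑ᶠ n, w n * g n := by
      have := finsum_comp_equiv (Equiv.subRight c) (f := fun n => w n * g n)
      simpa only [Equiv.subRight_apply] using this
    have h2 : (∑ᶠ n, w n * g (n - c)) = ∑ᶠ n, w (n + c) * g n := by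
      have := finsum_comp_equiv (Equiv.subRight c) (f := fun n => w (n + c) * g n)
      simpa only [Equiv.subRight_apply, sub_add_cancel] using this
    have hL : (fun n => (w n - w (n - c)) * (g n - g (n - c)))
        = fun n => (w n * g n + w (n - c) * g (n - c)) - (w n * g (n - c) + w (n - c) * g n) := by
      funext n; ring
    have hR : (fun n => ((w n - w (n - c)) + (w n - w (n + c))) * g n)
        = fun n => (w n * g n + w n * g n) - (w (n - c) * g n + w (n + c) * g n) := by
      funext n; ring
    calc (∑ᶠ n, (w n - w (n - c)) * (g n - g (n - c)))
        = (∑ᶠ n, ((w n * g n + w (n - c) * g (n - c)) - (w n * g (n - c) + w (n - c) * g n))) := by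
          rw [hL]
      _ = ((∑ᶠ n, w n * g n) + ∑ᶠ n, w (n - c) * g (n - c))
          - ((∑ᶠ n, w n * g (n - c)) + ∑ᶠ n, w (n - c) * g n) := by
          rw [finsum_sub_distrib, finsum_add_distrib f1 f2, finsum_add_distrib f3 f4]
          · exact (f1.union f2).subset (Function.support_add _ _)
          · exact (f3.union f4).subset (Function.support_add _ _)
      _ = ((∑ᶠ n, w n * g n) + ∑ᶠ n, w n * g n)
          - ((∑ᶠ n, w (n - c) * g n) + ∑ᶠ n, w (n + c) * g n) := by
          rw [h1, h2]; ring
      _ = (∑ᶠ n, ((w n * g n + w n * g n) - (w (n - c) * g n + w (n + c) * g n))) := by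
          rw [finsum_sub_distrib, finsum_add_distrib f1 f1, finsum_add_distrib f4 f5]
          · exact (f1.union f1).subset (Function.support_add _ _)
          · exact (f4.union f5).subset (Function.support_add _ _)
      _ = ∑ᶠ n, ((w n - w (n - c)) + (w n - w (n + c))) * g n := by rw [← hR]
  -- total summation by parts
  have hE : (∑ᶠ n, ∑ j : Fin d, (w n - w (n - Pi.single j 1)) * (g n - g (n - Pi.single j 1)))
      = ∑ᶠ n, negLap w n * g n := by
    rw [finsum_sum_comm _ _ (fun j _ => hEfin j)]
    have : ∀ j ∈ (Finset.univ : Finset (Fin d)),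
        (∑ᶠ n, (w n - w (n - Pi.single j 1)) * (g n - g (n - Pi.single j 1)))
        = ∑ᶠ n, ((w n - w (n - Pi.single j 1)) + (w n - w (n + Pi.single j 1))) * g n :=
      fun j _ => hpart j
    rw [Finset.sum_congr rfl this, sum_finsum_comm _ _ (fun j _ => hRfin j)]
    refine finsum_congr fun n => ?_
    rw [negLap_eq, Finset.sum_mul]
  -- pointwise decomposition of the square term
  have hBAE : ∀ n, (∑ j : Fin d, (Dop j (fun m => w m * ψ m) n) ^ 2)
      = (∑ j : Fin d, w n * w (n - Pi.single j 1) * (Dop j ψ n) ^ 2)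
        + ∑ j : Fin d, (w n - w (n - Pi.single j 1)) * (g n - g (n - Pi.single j 1)) := by
    intro n
    rw [← Finset.sum_add_distrib]
    refine Finset.sum_congr rfl fun j _ => ?_
    simp only [Dop, hg]
    ring
  have hAfin' : (Function.support fun n =>
      ∑ j : Fin d, w n * w (n - Pi.single j 1) * (Dop j ψ n) ^ 2).Finite :=
    support_fsum_finite _ hAfin
  have hEfin' : (Function.support fun n =>
      ∑ j : Fin d, (w n - w (n - Pi.single j 1)) * (g n - g (n - Pi.single j 1))).Finite :=
    support_fsum_finite _ hEfin
  have hB : (∑ᶠ n, ∑ j : Fin d, (Dop j (fun m => w m * ψ m) n) ^ 2)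
      = (∑ᶠ n, ∑ j : Fin d, w n * w (n - Pi.single j 1) * (Dop j ψ n) ^ 2)
        + ∑ᶠ n, negLap w n * g n := by
    rw [finsum_congr hBAE, finsum_add_distrib hAfin' hEfin', hE]
  -- positivity of the supersolution term
  have hCfin : (Function.support fun n => (V n - lam) * w n ^ 2 * ψ n ^ 2).Finite := by
    refine hψfin.subset fun n hn => ?_
    simp only [Function.mem_support] at hn ⊢
    intro h; rw [h] at hn; simp at hn
  have hLfin : (Function.support fun n => negLap w n * g n).Finite := by
    refine hgfin.subset fun n hn => ?_
    simp only [Function.mem_support] at hn ⊢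
    intro h; rw [h, mul_zero] at hn; exact hn rfl
  have hpos : 0 ≤ (∑ᶠ n, negLap w n * g n) + ∑ᶠ n, (V n - lam) * w n ^ 2 * ψ n ^ 2 := by
    rw [← finsum_add_distrib hLfin hCfin]
    refine finsum_nonneg fun n => ?_
    by_cases hn : ψ n = 0
    · simp [hgsupp n hn, hn]
    · have hN : (N : ℝ) ≤ znorm n := by
        by_contra hc
        exact hn (hψ0 n (lt_of_not_ge hc))
      have hkey : negLap w n * g n + (V n - lam) * w n ^ 2 * ψ n ^ 2
          = (negLap w n + (V n - lam) * w n) * (w n * ψ n ^ 2) := by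
        simp only [hg]; ring
      rw [hkey]
      exact mul_nonneg (hw_super n hN) (mul_nonneg (hw_nonneg n) (sq_nonneg _))
  rw [hB]
  linarith


end SupersolutionAux

/-- Inequality derived from a positive supersolution `w` of `(H_V - λ)ψ = 0` in
`ℤ^d_{≥N}` tested against a finitely supported `φ` vanishing in the annulus
`N-1 ≤ |n| < N+1`:
`Σ_{|n|≥N} Σ_j [D_j(wφ)]_n² + Σ_{|n|≥N} (V_n - λ) w_n² φ_n²
  ≥ Σ_{|n|≥N} Σ_j w_n w_{n-δ_j} (D_j φ)_n²`. -/
theorem supersolution_inequality {d : ℕ} (N : ℕ) (V : (Fin d → ℤ) → ℝ) (lam : ℝ)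
    (w φ : (Fin d → ℤ) → ℝ)
    (hw_nonneg : ∀ n, 0 ≤ w n)
    (hw_super : ∀ n : Fin d → ℤ, (N : ℝ) ≤ znorm n →
      0 ≤ negLap w n + (V n - lam) * w n)
    (hφ : (Function.support φ).Finite)
    (hφ_van : ∀ n : Fin d → ℤ, (N : ℝ) - 1 ≤ znorm n → znorm n < (N : ℝ) + 1 → φ n = 0) :
    ∑ᶠ (n : Fin d → ℤ) (_ : (N : ℝ) ≤ znorm n),
        ∑ j : Fin d, w n * w (n - Pi.single j 1) * (Dop j φ n) ^ 2
    ≤ (∑ᶠ (n : Fin d → ℤ) (_ : (N : ℝ) ≤ znorm n),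
        ∑ j : Fin d, (Dop j (fun m => w m * φ m) n) ^ 2)
      + (∑ᶠ (n : Fin d → ℤ) (_ : (N : ℝ) ≤ znorm n), (V n - lam) * w n ^ 2 * φ n ^ 2) := by
  classical
  set ψ : (Fin d → ℤ) → ℝ := fun n => if (N : ℝ) ≤ znorm n then φ n else 0 with hψdef
  have hψfin : (Function.support ψ).Finite := by
    refine hφ.subset fun n hn => ?_
    simp only [Function.mem_support, hψdef] at hn ⊢
    intro h
    apply hn
    split_ifs <;> simp [h]
  have hψ0 : ∀ n, znorm n < (N : ℝ) → ψ n = 0 := fun n h => by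
    simp [hψdef, not_le.mpr h]
  have hψeq : ∀ n, (N : ℝ) ≤ znorm n → ψ n = φ n := fun n h => by simp [hψdef, h]
  have hsub_le : ∀ (n : Fin d → ℤ) (j : Fin d), znorm (n - Pi.single j 1) ≤ znorm n + 1 := by
    intro n j
    have h := znorm_sub_le n (Pi.single j 1)
    rwa [znorm_single] at h
  have hle_sub : ∀ (n : Fin d → ℤ) (j : Fin d), znorm n - 1 ≤ znorm (n - Pi.single j 1) := by
    intro n j
    have h := znorm_sub_le (n - Pi.single j 1) (-(Pi.single j 1))
    rw [znorm_neg, znorm_single] at h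
    have h2 : n - Pi.single j 1 - -(Pi.single j 1) = n := by abel
    rw [h2] at h
    linarith
  have hψsub : ∀ (n : Fin d → ℤ) (j : Fin d), (N : ℝ) ≤ znorm n →
      ψ (n - Pi.single j 1) = φ (n - Pi.single j 1) := by
    intro n j hn
    by_cases h : (N : ℝ) ≤ znorm (n - Pi.single j 1)
    · exact hψeq _ h
    · push_neg at h
      have hv : φ (n - Pi.single j 1) = 0 :=
        hφ_van _ (by have := hle_sub n j; linarith) (by linarith)
      rw [hψ0 _ h, hv]
  have hψsub0 : ∀ (n : Fin d → ℤ) (j : Fin d), znorm n < (N : ℝ) →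
      ψ (n - Pi.single j 1) = 0 := by
    intro n j hn
    by_cases h : (N : ℝ) ≤ znorm (n - Pi.single j 1)
    · rw [hψeq _ h]
      exact hφ_van _ (by linarith) (by have := hsub_le n j; linarith)
    · exact hψ0 _ (lt_of_not_ge h)
  have e1 : (∑ᶠ (n : Fin d → ℤ) (_ : (N : ℝ) ≤ znorm n),
        ∑ j : Fin d, w n * w (n - Pi.single j 1) * (Dop j φ n) ^ 2)
      = ∑ᶠ n, ∑ j : Fin d, w n * w (n - Pi.single j 1) * (Dop j ψ n) ^ 2 := by
    refine finsum_congr fun n => ?_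
    rw [finsum_eq_if]
    split_ifs with h
    · refine Finset.sum_congr rfl fun j _ => ?_
      simp only [Dop, hψeq n h, hψsub n j h]
    · push_neg at h
      refine (Finset.sum_eq_zero fun j _ => ?_).symm
      simp [Dop, hψ0 n h, hψsub0 n j h]
  have e2 : (∑ᶠ (n : Fin d → ℤ) (_ : (N : ℝ) ≤ znorm n),
        ∑ j : Fin d, (Dop j (fun m => w m * φ m) n) ^ 2)
      = ∑ᶠ n, ∑ j : Fin d, (Dop j (fun m => w m * ψ m) n) ^ 2 := by
    refine finsum_congr fun n => ?_
    rw [finsum_eq_if]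
    split_ifs with h
    · refine Finset.sum_congr rfl fun j _ => ?_
      simp only [Dop, hψeq n h, hψsub n j h]
    · push_neg at h
      refine (Finset.sum_eq_zero fun j _ => ?_).symm
      simp [Dop, hψ0 n h, hψsub0 n j h]
  have e3 : (∑ᶠ (n : Fin d → ℤ) (_ : (N : ℝ) ≤ znorm n), (V n - lam) * w n ^ 2 * φ n ^ 2)
      = ∑ᶠ n, (V n - lam) * w n ^ 2 * ψ n ^ 2 := by
    refine finsum_congr fun n => ?_
    rw [finsum_eq_if]
    split_ifs with h
    · rw [hψeq n h]
    · push_neg at h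
      rw [hψ0 n h]
      simp
  rw [e1, e2, e3]
  exact key_ineq N V lam w ψ hw_nonneg hw_super hψfin hψ0
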